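/- Let γ : ℝ → EuclideanSpace ℝ (Fin 3) be a smooth unit-speed curve, closed with period ℓ > 0, with nowhere-vanishing curvature κ(t) = ‖γ''(t)‖ > 0. If the total torsion satisfies ∫₀^ℓ τ(t) dt = 2πn for some integer n, where τ(t) = ⟨γ'(t) ×₃ γ''(t), γ'''(t)⟩ / ‖γ''(t)‖², then there exists a smooth map N : ℝ → EuclideanSpace ℝ (Fin 3) with N(t + ℓ) = N(t), ‖N(t)‖ = 1, ⟨N(t), γ'(t)⟩ = 0 for all t, and such that for every t the vector N'(t) is a scalar multiple of γ'(t); that is, γ can appear as a line of curvature of an oriented surface. -/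

import Mathlib

open scoped RealInnerProductSpace

/-- The torsion of a unit-speed curve in `ℝ³` with nowhere-vanishing curvature:
`τ(t) = ⟨γ'(t) ×₃ γ''(t), γ'''(t)⟩ / ‖γ''(t)‖²`. -/
noncomputable def torsion3 (γ : ℝ → EuclideanSpace ℝ (Fin 3)) (t : ℝ) : ℝ :=
  (inner ℝ ((WithLp.equiv 2 (Fin 3 → ℝ)).symm
      (crossProduct (WithLp.equiv 2 (Fin 3 → ℝ) (deriv γ t))
        (WithLp.equiv 2 (Fin 3 → ℝ) (deriv (deriv γ) t))))
    (deriv (deriv (deriv γ)) t) : ℝ) / ‖deriv (deriv γ) t‖ ^ 2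

noncomputable abbrev E3 := EuclideanSpace ℝ (Fin 3)

noncomputable def cr (x y : E3) : E3 :=
  (WithLp.equiv 2 (Fin 3 → ℝ)).symm
    (crossProduct (WithLp.equiv 2 (Fin 3 → ℝ) x) (WithLp.equiv 2 (Fin 3 → ℝ) y))




lemma cr_0 (x y : E3) : cr x y 0 = x 1 * y 2 - x 2 * y 1 := by simp [cr, cross_apply]
lemma cr_1 (x y : E3) : cr x y 1 = x 2 * y 0 - x 0 * y 2 := by simp [cr, cross_apply]
lemma cr_2 (x y : E3) : cr x y 2 = x 0 * y 1 - x 1 * y 0 := by simp [cr, cross_apply]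

lemma inner3 (x y : E3) : ⟪x, y⟫ = x 0 * y 0 + x 1 * y 1 + x 2 * y 2 := by
  simp [PiLp.inner_apply, Fin.sum_univ_three, RCLike.inner_apply, conj_trivial]
  ring

lemma e3_ext (x y : E3) (h0 : x 0 = y 0) (h1 : x 1 = y 1) (h2 : x 2 = y 2) : x = y := by
  apply PiLp.ext; intro i; fin_cases i <;> assumption

lemma smul_apply3 (z : E3) (c : ℝ) (i : Fin 3) : (c • z) i = c * z i := rfl
lemma add_apply3 (z w : E3) (i : Fin 3) : (z + w) i = z i + w i := rfl
lemma sub_apply3 (z w : E3) (i : Fin 3) : (z - w) i = z i - w i := rfl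
lemma neg_apply3 (z : E3) (i : Fin 3) : (-z) i = -(z i) := rfl

lemma cr_orth_left (x y : E3) : ⟪cr x y, x⟫ = 0 := by
  simp only [inner3, cr_0, cr_1, cr_2]; ring
lemma cr_orth_right (x y : E3) : ⟪cr x y, y⟫ = 0 := by
  simp only [inner3, cr_0, cr_1, cr_2]; ring
lemma cr_self (x : E3) : cr x x = 0 := by
  refine e3_ext _ _ ?_ ?_ ?_ <;> simp only [cr_0, cr_1, cr_2] <;> ring_nf <;> rfl
lemma cr_smul_right (c : ℝ) (x y : E3) : cr x (c • y) = c • cr x y := by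
  refine e3_ext _ _ ?_ ?_ ?_ <;> simp only [cr_0, cr_1, cr_2, smul_apply3] <;> ring
lemma cr_add_right (x y z : E3) : cr x (y + z) = cr x y + cr x z := by
  refine e3_ext _ _ ?_ ?_ ?_ <;> simp only [cr_0, cr_1, cr_2, add_apply3] <;> ring
lemma lagrange_self (x y : E3) : cr x (cr x y) = ⟪x, y⟫ • x - ⟪x, x⟫ • y := by
  refine e3_ext _ _ ?_ ?_ ?_ <;>
    simp only [cr_0, cr_1, cr_2, sub_apply3, smul_apply3, inner3] <;> ring
lemma cr_norm (x y : E3) : ⟪cr x y, cr x y⟫ = ⟪x, x⟫ * ⟪y, y⟫ - ⟪x, y⟫ ^ 2 := by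
  simp only [inner3, cr_0, cr_1, cr_2]; ring

lemma key3 (T A J : E3) (h1 : ⟪T, T⟫ = 1) (h2 : ⟪T, A⟫ = 0) :
    ⟪A, A⟫ • J = ⟪cr T A, J⟫ • cr T A + (⟪T, J⟫ * ⟪A, A⟫) • T + ⟪A, J⟫ • A := by
  rw [inner3] at h1 h2
  refine e3_ext _ _ ?_ ?_ ?_ <;>
      simp only [smul_apply3, add_apply3, inner3, cr_0, cr_1, cr_2]
  · linear_combination
      (-((A 0*A 0+A 1*A 1+A 2*A 2) * J 0) + (A 0*J 0+A 1*J 1+A 2*J 2) * A 0) * h1 +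
      ((T 0*A 0+T 1*A 1+T 2*A 2) * J 0 - (T 0*J 0+T 1*J 1+T 2*J 2) * A 0
        - (A 0*J 0+A 1*J 1+A 2*J 2) * T 0) * h2
  · linear_combination
      (-((A 0*A 0+A 1*A 1+A 2*A 2) * J 1) + (A 0*J 0+A 1*J 1+A 2*J 2) * A 1) * h1 +
      ((T 0*A 0+T 1*A 1+T 2*A 2) * J 1 - (T 0*J 0+T 1*J 1+T 2*J 2) * A 1
        - (A 0*J 0+A 1*J 1+A 2*J 2) * T 1) * h2
  · linear_combination
      (-((A 0*A 0+A 1*A 1+A 2*A 2) * J 2) + (A 0*J 0+A 1*J 1+A 2*J 2) * A 2) * h1 +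
      ((T 0*A 0+T 1*A 1+T 2*A 2) * J 2 - (T 0*J 0+T 1*J 1+T 2*J 2) * A 2
        - (A 0*J 0+A 1*J 1+A 2*J 2) * T 2) * h2

lemma hasDerivAt_e3 {f : ℝ → E3} {v : E3} {t : ℝ} :
    HasDerivAt f v t ↔ ∀ i, HasDerivAt (fun s => f s i) (v i) t := by
  constructor
  · intro h
    have h1 : HasDerivAt (fun s => (fun i => f s i : Fin 3 → ℝ)) (fun i => v i) t := by
      exact ((PiLp.continuousLinearEquiv 2 ℝ (fun _ : Fin 3 => ℝ))
        : E3 →L[ℝ] (Fin 3 → ℝ)).hasFDerivAt.comp_hasDerivAt t h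
    exact hasDerivAt_pi.mp h1
  · intro h
    have h1 : HasDerivAt (fun s => (fun i => f s i : Fin 3 → ℝ)) (fun i => v i) t :=
      hasDerivAt_pi.mpr h
    exact (((PiLp.continuousLinearEquiv 2 ℝ (fun _ : Fin 3 => ℝ)).symm
        : (Fin 3 → ℝ) →L[ℝ] E3).hasFDerivAt.comp_hasDerivAt t h1 : _)

lemma hasDerivAt_cr {f g : ℝ → E3} {f' g' : E3} {t : ℝ}
    (hf : HasDerivAt f f' t) (hg : HasDerivAt g g' t) :
    HasDerivAt (fun s => cr (f s) (g s)) (cr f' (g t) + cr (f t) g') t := by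
  rw [hasDerivAt_e3] at hf hg ⊢
  have h0 : HasDerivAt (fun s => cr (f s) (g s) 0)
      ((cr f' (g t) + cr (f t) g') 0) t := by
    simp only [cr_0, add_apply3]
    convert ((hf 1).mul (hg 2)).sub ((hf 2).mul (hg 1)) using 1
    all_goals first | rfl | ring
  have h1 : HasDerivAt (fun s => cr (f s) (g s) 1)
      ((cr f' (g t) + cr (f t) g') 1) t := by
    simp only [cr_1, add_apply3]
    convert ((hf 2).mul (hg 0)).sub ((hf 0).mul (hg 2)) using 1
    all_goals first | rfl | ring
  have h2 : HasDerivAt (fun s => cr (f s) (g s) 2)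
      ((cr f' (g t) + cr (f t) g') 2) t := by
    simp only [cr_2, add_apply3]
    convert ((hf 0).mul (hg 1)).sub ((hf 1).mul (hg 0)) using 1
    all_goals first | rfl | ring
  intro i; fin_cases i
  · exact h0
  · exact h1
  · exact h2

lemma contDiff_cr {f g : ℝ → E3} (hf : ContDiff ℝ (⊤ : ℕ∞) f) (hg : ContDiff ℝ (⊤ : ℕ∞) g) :
    ContDiff ℝ (⊤ : ℕ∞) (fun t => cr (f t) (g t)) := by
  rw [contDiff_euclidean] at hf hg ⊢
  have h0 : ContDiff ℝ (⊤ : ℕ∞) (fun t => cr (f t) (g t) 0) := by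
    simp only [cr_0]; exact ((hf 1).mul (hg 2)).sub ((hf 2).mul (hg 1))
  have h1 : ContDiff ℝ (⊤ : ℕ∞) (fun t => cr (f t) (g t) 1) := by
    simp only [cr_1]; exact ((hf 2).mul (hg 0)).sub ((hf 0).mul (hg 2))
  have h2 : ContDiff ℝ (⊤ : ℕ∞) (fun t => cr (f t) (g t) 2) := by
    simp only [cr_2]; exact ((hf 0).mul (hg 1)).sub ((hf 1).mul (hg 0))
  intro i; fin_cases i
  · exact h0
  · exact h1
  · exact h2

lemma frenet_aux (Tv Av Jv u bvv : E3) (k r tau sig : ℝ) (hk : k ≠ 0)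
    (hb : bvv = k⁻¹ • u) (ht : tau = ⟪u, Jv⟫ / k ^ 2)
    (hs : sig = r + ⟪Av, Jv⟫ * (k ^ 3)⁻¹)
    (hkey : k ^ 2 • Jv = ⟪u, Jv⟫ • u + (-k ^ 2 * k ^ 2) • Tv + ⟪Av, Jv⟫ • Av) :
    k⁻¹ • Jv + r • Av = (-k) • Tv + tau • bvv + sig • Av := by
  subst hb ht hs
  linear_combination (norm := (match_scalars <;> field_simp <;> ring)) ((k : ℝ) ^ 3)⁻¹ • hkey

set_option maxHeartbeats 2000000 in
/-- If the total torsion of a closed curve in `ℝ³` is an integer multiple of `2π`,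
then it can appear as a line of curvature of an oriented surface. -/
theorem exists_line_of_curvature_of_total_torsion_multiple
    (γ : ℝ → EuclideanSpace ℝ (Fin 3)) (ℓ : ℝ) (hℓ : 0 < ℓ)
    (hsmooth : ContDiff ℝ (⊤ : ℕ∞) γ)
    (hunit : ∀ t, ‖deriv γ t‖ = 1)
    (hclosed : ∀ t, γ (t + ℓ) = γ t)
    (hcurv : ∀ t, ‖deriv (deriv γ) t‖ > 0)
    (n : ℤ)
    (htorsion : ∫ t in (0:ℝ)..ℓ, torsion3 γ t = 2 * Real.pi * n) :
    ∃ N : ℝ → EuclideanSpace ℝ (Fin 3),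
      ContDiff ℝ (⊤ : ℕ∞) N ∧
      (∀ t, N (t + ℓ) = N t) ∧
      (∀ t, ‖N t‖ = 1) ∧
      (∀ t, ⟪N t, deriv γ t⟫ = 0) ∧
      (∀ t, ∃ c : ℝ, deriv N t = c • deriv γ t) := by
  classical
  set T : ℝ → E3 := deriv γ with hTdef
  set A : ℝ → E3 := deriv T with hAdef
  set J : ℝ → E3 := deriv A with hJdef
  have hone : (1 : WithTop ℕ∞) ≤ ((⊤ : ℕ∞) : WithTop ℕ∞) := by exact_mod_cast le_top
  have hTs : ContDiff ℝ (⊤ : ℕ∞) T := (contDiff_infty_iff_deriv.mp hsmooth).2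
  have hAs : ContDiff ℝ (⊤ : ℕ∞) A := (contDiff_infty_iff_deriv.mp hTs).2
  have hJs : ContDiff ℝ (⊤ : ℕ∞) J := (contDiff_infty_iff_deriv.mp hAs).2
  have hdT : ∀ t, HasDerivAt γ (T t) t := fun t =>
    ((hsmooth.differentiable (by simp)) t).hasDerivAt
  have hdA : ∀ t, HasDerivAt T (A t) t := fun t =>
    ((hTs.differentiable (by simp)) t).hasDerivAt
  have hdJ : ∀ t, HasDerivAt A (J t) t := fun t =>
    ((hAs.differentiable (by simp)) t).hasDerivAt
  -- basic scalar identities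
  have hTT : ∀ t, ⟪T t, T t⟫ = 1 := fun t => by
    rw [real_inner_self_eq_norm_sq, hunit t]; norm_num
  have hTA : ∀ t, ⟪T t, A t⟫ = 0 := by
    intro t
    have hd : HasDerivAt (fun s => ⟪T s, T s⟫) (⟪T t, A t⟫ + ⟪A t, T t⟫) t :=
      HasDerivAt.inner ℝ (hdA t) (hdA t)
    have hconst : (fun s => ⟪T s, T s⟫) = fun _ => (1 : ℝ) := funext hTT
    rw [hconst] at hd
    have h0 := hd.unique (hasDerivAt_const t (1 : ℝ))
    have hcomm : ⟪A t, T t⟫ = ⟪T t, A t⟫ := real_inner_comm _ _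
    linarith [h0, hcomm]
  have hTJ : ∀ t, ⟪T t, J t⟫ = -⟪A t, A t⟫ := by
    intro t
    have hd : HasDerivAt (fun s => ⟪T s, A s⟫) (⟪T t, J t⟫ + ⟪A t, A t⟫) t :=
      HasDerivAt.inner ℝ (hdA t) (hdJ t)
    have hconst : (fun s => ⟪T s, A s⟫) = fun _ => (0 : ℝ) := funext hTA
    rw [hconst] at hd
    have h0 := hd.unique (hasDerivAt_const t (0 : ℝ))
    linarith [h0]
  -- curvature
  set κ : ℝ → ℝ := fun t => ‖A t‖ with hκdef
  have hκpos : ∀ t, 0 < κ t := hcurv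
  have hκne : ∀ t, κ t ≠ 0 := fun t => ne_of_gt (hκpos t)
  have hA0 : ∀ t, A t ≠ 0 := fun t => by
    intro h; exact hκne t (by simp [hκdef, h])
  have hAA : ∀ t, ⟪A t, A t⟫ = κ t ^ 2 := fun t => real_inner_self_eq_norm_sq _
  have hκs : ContDiff ℝ (⊤ : ℕ∞) κ := hAs.norm ℝ hA0
  have hκinvs : ContDiff ℝ (⊤ : ℕ∞) (fun t => (κ t)⁻¹) := hκs.inv hκne
  set ρ : ℝ → ℝ := fun t => deriv (fun s => (κ s)⁻¹) t with hρdef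
  have hdρ : ∀ t, HasDerivAt (fun s => (κ s)⁻¹) (ρ t) t := fun t =>
    ((hκinvs.differentiable (by simp)) t).hasDerivAt
  -- normal and binormal
  set nv : ℝ → E3 := fun t => (κ t)⁻¹ • A t with hnvdef
  set bv : ℝ → E3 := fun t => cr (T t) (nv t) with hbvdef
  have hnvt : ∀ t, nv t = (κ t)⁻¹ • A t := fun _ => rfl
  have hbvt : ∀ t, bv t = cr (T t) (nv t) := fun _ => rfl
  have hκt : ∀ t, κ t = ‖A t‖ := fun _ => rfl
  have hnvs : ContDiff ℝ (⊤ : ℕ∞) nv := hκinvs.smul hAs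
  have hbvs : ContDiff ℝ (⊤ : ℕ∞) bv := contDiff_cr hTs hnvs
  have hdnv : ∀ t, HasDerivAt nv ((κ t)⁻¹ • J t + ρ t • A t) t := fun t =>
    (hdρ t).smul (hdJ t)
  have hdbv : ∀ t, HasDerivAt bv
      (cr (A t) (nv t) + cr (T t) ((κ t)⁻¹ • J t + ρ t • A t)) t := fun t =>
    hasDerivAt_cr (hdA t) (hdnv t)
  -- inner products of the frame
  have hTn : ∀ t, ⟪T t, nv t⟫ = 0 := fun t => by
    rw [hnvt t, real_inner_smul_right, hTA t, mul_zero]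
  have hnn : ∀ t, ⟪nv t, nv t⟫ = 1 := fun t => by
    rw [hnvt t]
    simp only [real_inner_smul_right, real_inner_smul_left, hAA t]
    field_simp [hκne t]
  have hnb : ∀ t, ⟪nv t, bv t⟫ = 0 := fun t => by
    rw [real_inner_comm, hbvt t]; exact cr_orth_right _ _
  have hbn : ∀ t, ⟪bv t, nv t⟫ = 0 := fun t => by
    rw [hbvt t]; exact cr_orth_right _ _
  have hTb : ∀ t, ⟪T t, bv t⟫ = 0 := fun t => by
    rw [real_inner_comm, hbvt t]; exact cr_orth_left _ _
  have hbb : ∀ t, ⟪bv t, bv t⟫ = 1 := fun t => by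
    rw [hbvt t, cr_norm, hTT t, hnn t, hTn t]; norm_num
  -- torsion
  set τ : ℝ → ℝ := fun t => torsion3 γ t with hτdef
  have hτ : ∀ t, τ t = ⟪cr (T t) (A t), J t⟫ / κ t ^ 2 := fun t => rfl
  have hτs : ContDiff ℝ (⊤ : ℕ∞) τ := by
    have : τ = fun t => ⟪cr (T t) (A t), J t⟫ / κ t ^ 2 := funext hτ
    rw [this]
    exact ContDiff.div (ContDiff.inner ℝ (contDiff_cr hTs hAs) hJs)
      (hκs.pow 2) (fun t => pow_ne_zero 2 (hκne t))
  -- the angle function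
  set θ : ℝ → ℝ := fun t => -∫ s in (0:ℝ)..t, τ s with hθdef
  have hdθ : ∀ t, HasDerivAt θ (-τ t) t := fun t =>
    ((hτs.continuous.integral_hasStrictDerivAt 0 t).hasDerivAt).neg
  have hθs : ContDiff ℝ (⊤ : ℕ∞) θ := by
    rw [contDiff_infty_iff_deriv]
    constructor
    · exact fun t => (hdθ t).differentiableAt
    · have : deriv θ = fun t => -τ t := funext fun t => (hdθ t).deriv
      rw [this]; exact hτs.neg
  -- the normal field
  refine ⟨fun t => Real.cos (θ t) • nv t + Real.sin (θ t) • bv t, ?_, ?_, ?_, ?_, ?_⟩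
  · exact ((Real.contDiff_cos.comp hθs).smul hnvs).add
      ((Real.contDiff_sin.comp hθs).smul hbvs)
  · -- periodicity
    have hγper : (fun s => γ (s + ℓ)) = γ := funext hclosed
    have hTper : ∀ t, T (t + ℓ) = T t := by
      intro t
      calc T (t + ℓ) = deriv (fun s => γ (s + ℓ)) t := (deriv_comp_add_const γ ℓ t).symm
        _ = T t := by rw [hγper]
    have hTfun : (fun s => T (s + ℓ)) = T := funext hTper
    have hAper : ∀ t, A (t + ℓ) = A t := by
      intro t
      calc A (t + ℓ) = deriv (fun s => T (s + ℓ)) t := (deriv_comp_add_const T ℓ t).symm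
        _ = A t := by rw [hTfun]
    have hAfun : (fun s => A (s + ℓ)) = A := funext hAper
    have hJper : ∀ t, J (t + ℓ) = J t := by
      intro t
      calc J (t + ℓ) = deriv (fun s => A (s + ℓ)) t := (deriv_comp_add_const A ℓ t).symm
        _ = J t := by rw [hAfun]
    have hκper : ∀ t, κ (t + ℓ) = κ t := fun t => by rw [hκt, hκt, hAper t]
    have hτper : Function.Periodic τ ℓ := by
      intro t
      rw [hτ, hτ, hTper t, hAper t, hJper t, hκper t]
    have hθper : ∀ t, θ (t + ℓ) = θ t - 2 * Real.pi * n := by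
      intro t
      have hint : IntervalIntegrable τ MeasureTheory.volume 0 t :=
        hτs.continuous.intervalIntegrable 0 t
      have hint2 : IntervalIntegrable τ MeasureTheory.volume t (t + ℓ) :=
        hτs.continuous.intervalIntegrable t (t + ℓ)
      have hsplit : (∫ s in (0:ℝ)..t, τ s) + ∫ s in t..(t+ℓ), τ s
          = ∫ s in (0:ℝ)..(t+ℓ), τ s :=
        intervalIntegral.integral_add_adjacent_intervals hint hint2
      have hshift : (∫ s in t..(t+ℓ), τ s) = ∫ s in (0:ℝ)..((0:ℝ)+ℓ), τ s :=
        hτper.intervalIntegral_add_eq t 0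
      rw [zero_add] at hshift
      have : (∫ s in t..(t+ℓ), τ s) = 2 * Real.pi * n := by
        rw [hshift]; exact htorsion
      show -∫ s in (0:ℝ)..(t+ℓ), τ s = (-∫ s in (0:ℝ)..t, τ s) - 2 * Real.pi * n
      rw [← hsplit, this]
      ring
    intro t
    have hnper : nv (t + ℓ) = nv t := by rw [hnvt, hnvt, hκper t, hAper t]
    have hbper : bv (t + ℓ) = bv t := by rw [hbvt, hbvt, hTper t, hnper]
    show Real.cos (θ (t + ℓ)) • nv (t + ℓ) + Real.sin (θ (t + ℓ)) • bv (t + ℓ)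
      = Real.cos (θ t) • nv t + Real.sin (θ t) • bv t
    rw [hθper t, hnper, hbper]
    have hzero : Real.sin (2 * Real.pi * n) = 0 := by
      have h : (2 * Real.pi * n : ℝ) = ((2 * n : ℤ) : ℝ) * Real.pi := by push_cast; ring
      rw [h, Real.sin_int_mul_pi]
    have hone' : Real.cos (2 * Real.pi * n) = 1 := by
      have h : (2 * Real.pi * n : ℝ) = ((n : ℤ) : ℝ) * (2 * Real.pi) := by push_cast; ring
      rw [h, Real.cos_int_mul_two_pi]
    rw [Real.cos_sub, Real.sin_sub, hzero, hone']
    ring_nf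
  · -- unit norm
    intro t
    show ‖Real.cos (θ t) • nv t + Real.sin (θ t) • bv t‖ = 1
    have hNN : ⟪Real.cos (θ t) • nv t + Real.sin (θ t) • bv t,
        Real.cos (θ t) • nv t + Real.sin (θ t) • bv t⟫ = 1 := by
      simp only [inner_add_left, inner_add_right, real_inner_smul_left,
        real_inner_smul_right, hnn t, hbb t, hnb t, hbn t]
      nlinarith [Real.sin_sq_add_cos_sq (θ t)]
    have h2 : ‖Real.cos (θ t) • nv t + Real.sin (θ t) • bv t‖ ^ 2 = 1 := by
      rw [← real_inner_self_eq_norm_sq]; exact hNN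
    nlinarith [norm_nonneg (Real.cos (θ t) • nv t + Real.sin (θ t) • bv t), h2]
  · -- orthogonal to T
    intro t
    show ⟪Real.cos (θ t) • nv t + Real.sin (θ t) • bv t, T t⟫ = 0
    rw [real_inner_comm]
    simp only [inner_add_right, real_inner_smul_right, hTn t, hTb t]
    ring
  · -- Rodrigues
    intro t
    refine ⟨-(κ t * Real.cos (θ t)), ?_⟩
    -- Frenet: derivative of nv
    have hkey := key3 (T t) (A t) (J t) (hTT t) (hTA t)
    rw [hTJ t, hAA t] at hkey
    have hbu : bv t = (κ t)⁻¹ • cr (T t) (A t) := by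
      rw [hbvt t, hnvt t, cr_smul_right]
    have hτt : τ t = ⟪cr (T t) (A t), J t⟫ / κ t ^ 2 := hτ t
    -- σ-decomposition
    set σ : ℝ := ρ t + ⟪A t, J t⟫ * ((κ t) ^ 3)⁻¹ with hσdef
    have hn' : (κ t)⁻¹ • J t + ρ t • A t
        = (-(κ t)) • T t + τ t • bv t + σ • A t :=
      frenet_aux (T t) (A t) (J t) (cr (T t) (A t)) (bv t) (κ t) (ρ t) (τ t) σ
        (hκne t) hbu hτt hσdef hkey
    -- σ = 0
    have hσ0 : σ = 0 := by
      have hd : HasDerivAt (fun s => ⟪nv s, nv s⟫)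
          (⟪nv t, (κ t)⁻¹ • J t + ρ t • A t⟫ + ⟪(κ t)⁻¹ • J t + ρ t • A t, nv t⟫) t :=
        HasDerivAt.inner ℝ (hdnv t) (hdnv t)
      have hconst : (fun s => ⟪nv s, nv s⟫) = fun _ => (1 : ℝ) := funext hnn
      rw [hconst] at hd
      have h0 := hd.unique (hasDerivAt_const t (1 : ℝ))
      have h3 : ⟪A t, nv t⟫ = κ t := by
        rw [hnvt t, real_inner_smul_right, real_inner_comm (A t), hAA t]
        field_simp [hκne t]
        try ring
      have hval : ⟪(κ t)⁻¹ • J t + ρ t • A t, nv t⟫ = σ * κ t := by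
        rw [hn']
        simp only [inner_add_left, real_inner_smul_left]
        rw [hTn t, hbn t, h3]
        ring
      have hval2 : ⟪nv t, (κ t)⁻¹ • J t + ρ t • A t⟫ = σ * κ t := by
        rw [real_inner_comm]; exact hval
      rw [hval, hval2] at h0
      have : σ * κ t = 0 := by linarith
      exact (mul_eq_zero.mp this).resolve_right (hκne t)
    rw [hσ0, zero_smul, add_zero] at hn'
    -- derivative of bv simplification
    have hbv' : cr (A t) (nv t) + cr (T t) ((κ t)⁻¹ • J t + ρ t • A t)
        = (-(τ t)) • nv t := by
      have h1 : cr (A t) (nv t) = 0 := by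
        rw [hnvt t, cr_smul_right, cr_self, smul_zero]
      have h2 : cr (T t) ((κ t)⁻¹ • J t + ρ t • A t) = (-(τ t)) • nv t := by
        rw [hn', cr_add_right, cr_smul_right, cr_smul_right, cr_self, smul_zero,
          zero_add, hbvt t, lagrange_self, hTn t, hTT t, zero_smul, one_smul,
          zero_sub, smul_neg]
        module
      rw [h1, h2, zero_add]
    -- assemble the derivative of N
    have hdc : HasDerivAt (fun s => Real.cos (θ s)) (-Real.sin (θ t) * (-τ t)) t :=
      (hdθ t).cos
    have hds : HasDerivAt (fun s => Real.sin (θ s)) (Real.cos (θ t) * (-τ t)) t :=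
      (hdθ t).sin
    have hN1 : HasDerivAt (fun s => Real.cos (θ s) • nv s)
        (Real.cos (θ t) • ((κ t)⁻¹ • J t + ρ t • A t)
          + (-Real.sin (θ t) * (-τ t)) • nv t) t :=
      hdc.smul (hdnv t)
    have hN2 : HasDerivAt (fun s => Real.sin (θ s) • bv s)
        (Real.sin (θ t) • (cr (A t) (nv t) + cr (T t) ((κ t)⁻¹ • J t + ρ t • A t))
          + (Real.cos (θ t) * (-τ t)) • bv t) t :=
      hds.smul (hdbv t)
    have hN := hN1.add hN2
    rw [hbv', hn'] at hN
    have hval : Real.cos (θ t) • ((-(κ t)) • T t + τ t • bv t)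
          + (-Real.sin (θ t) * (-τ t)) • nv t
          + (Real.sin (θ t) • ((-(τ t)) • nv t) + (Real.cos (θ t) * (-τ t)) • bv t)
        = (-(κ t * Real.cos (θ t))) • T t := by
      module
    rw [hval] at hN
    exact hN.deriv
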